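/- arXiv:2312.00247 — 2 statements merged into one kernel-verified Lean document; each statement's English description precedes it below -/
import Mathlib

section
/- For n ≥ 2, j ∈ {0,...,n-2}, k ∈ {0,...,n}, and x in the open interval (j/(n-1), (j+1)/(n-1)), the ratio m_{k,n,j}(x) = b_{n,k}(x)/b_{n,j}(x) satisfies m_{k,n,j}(x) ≤ 1, where b_{n,k}(x) = C(n+k-1,k) x^k (1+x)^{-(n+k)}. -/
open Finset Set

/-- Basis functions of the truncated Baskakov operator on `[0,1]`:
`b_{n,k}(x) = C(n+k-1,k) x^k (1+x)^{-(n+k)}`. -/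
noncomputable def bk (n k : ℕ) (x : ℝ) : ℝ :=
  (Nat.choose (n + k - 1) k : ℝ) * x ^ k / (1 + x) ^ (n + k)

/-- Max-product truncated Baskakov operator on `[0,1]`. -/
noncomputable def UM (n : ℕ) (f : ℝ → ℝ) (x : ℝ) : ℝ :=
  ((range (n + 1)).sup' nonempty_range_add_one fun k => bk n k x * f ((k : ℝ) / n)) /
  ((range (n + 1)).sup' nonempty_range_add_one fun k => bk n k x)

/-- Basis functions on a general compact interval `[a,b]`. -/
noncomputable def bkab (a b : ℝ) (n k : ℕ) (x : ℝ) : ℝ :=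
  (Nat.choose (n + k - 1) k : ℝ) * ((x - a) / (b - a)) ^ k /
    ((b - 2 * a + x) / (b - a)) ^ (n + k)

/-- Max-product truncated Baskakov operator on `[a,b]`. -/
noncomputable def UMab (a b : ℝ) (n : ℕ) (f : ℝ → ℝ) (x : ℝ) : ℝ :=
  ((range (n + 1)).sup' nonempty_range_add_one fun k =>
      bkab a b n k x * f (a + (b - a) * k / n)) /
  ((range (n + 1)).sup' nonempty_range_add_one fun k => bkab a b n k x)

/-- Modulus of continuity `ω₁(f;δ)` of `f` on a set `s`. -/
noncomputable def omega1 (f : ℝ → ℝ) (s : Set ℝ) (δ : ℝ) : ℝ :=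
  sSup {d | ∃ x ∈ s, ∃ y ∈ s, |x - y| ≤ δ ∧ d = |f x - f y|}

lemma bk_choose_id (n k : ℕ) (hn : 2 ≤ n) :
    ((Nat.choose (n + (k+1) - 1) (k+1) : ℝ)) * (k+1)
      = ((n : ℝ) + k) * (Nat.choose (n + k - 1) k : ℝ) := by
  have h1 : n + (k+1) - 1 = (n + k - 1) + 1 := by omega
  have h2 : Nat.succ (n + k - 1) * Nat.choose (n + k - 1) k
      = Nat.choose (n + k - 1 + 1) (k + 1) * (k + 1) := Nat.add_one_mul_choose_eq _ _
  have h3 : Nat.succ (n + k - 1) = n + k := by omega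
  rw [h3] at h2
  have h2' : ((n:ℝ)+k) * (Nat.choose (n + k - 1) k : ℝ)
      = (Nat.choose (n + k - 1 + 1) (k+1) : ℝ) * ((k:ℝ)+1) := by exact_mod_cast h2
  rw [h1]
  linarith

lemma bk_choose_pos (n k : ℕ) (hn : 2 ≤ n) :
    (0 : ℝ) < (Nat.choose (n + k - 1) k : ℝ) := by
  have : 0 < Nat.choose (n + k - 1) k := Nat.choose_pos (by omega)
  exact_mod_cast this

lemma bk_key (n k : ℕ) (hn : 2 ≤ n) (x : ℝ) (hx : 0 < x)
    (c c' : ℝ) (hc : 0 < c) (hid : c' * (k+1) = ((n:ℝ) + k) * c) :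
    (x * ((n:ℝ) - 1) ≤ k + 1 → c' * x ≤ c * (1 + x)) ∧
    ((k:ℝ) + 1 ≤ x * ((n:ℝ) - 1) → c * (1 + x) ≤ c' * x) := by
  have hk1 : (0:ℝ) < (k:ℝ) + 1 := by positivity
  constructor
  · intro h
    rw [← mul_le_mul_iff_of_pos_right hk1]
    have hint : c * (x * ((n:ℝ) - 1)) ≤ c * ((k:ℝ) + 1) :=
      mul_le_mul_of_nonneg_left h hc.le
    have hid2 : c' * ((k:ℝ)+1) * x = ((n:ℝ) + k) * c * x := by rw [hid]
    nlinarith [hint, hid2]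
  · intro h
    rw [← mul_le_mul_iff_of_pos_right hk1]
    have hint : c * ((k:ℝ) + 1) ≤ c * (x * ((n:ℝ) - 1)) :=
      mul_le_mul_of_nonneg_left h hc.le
    have hid2 : c' * ((k:ℝ)+1) * x = ((n:ℝ) + k) * c * x := by rw [hid]
    nlinarith [hint, hid2]

lemma bk_succ_le (n k : ℕ) (hn : 2 ≤ n) (x : ℝ) (hx : 0 < x)
    (h : x * ((n:ℝ) - 1) ≤ k + 1) : bk n (k+1) x ≤ bk n k x := by
  have h1x : (0:ℝ) < 1 + x := by linarith
  set c := (Nat.choose (n + k - 1) k : ℝ) with hcdef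
  set c' := (Nat.choose (n + (k+1) - 1) (k+1) : ℝ) with hcdef'
  have key : c' * x ≤ c * (1 + x) :=
    (bk_key n k hn x hx c c' (bk_choose_pos n k hn) (bk_choose_id n k hn)).1 h
  unfold bk
  rw [div_le_div_iff₀ (by positivity) (by positivity)]
  have e1 : n + (k+1) = (n + k) + 1 := by omega
  rw [e1, pow_succ x k, pow_succ (1+x) (n+k)]
  calc c' * (x ^ k * x) * (1 + x) ^ (n + k)
      = (x ^ k * (1 + x) ^ (n + k)) * (c' * x) := by ring
    _ ≤ (x ^ k * (1 + x) ^ (n + k)) * (c * (1 + x)) :=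
        mul_le_mul_of_nonneg_left key (by positivity)
    _ = c * x ^ k * ((1 + x) ^ (n + k) * (1 + x)) := by ring

lemma bk_le_succ (n k : ℕ) (hn : 2 ≤ n) (x : ℝ) (hx : 0 < x)
    (h : (k:ℝ) + 1 ≤ x * ((n:ℝ) - 1)) : bk n k x ≤ bk n (k+1) x := by
  have h1x : (0:ℝ) < 1 + x := by linarith
  set c := (Nat.choose (n + k - 1) k : ℝ) with hcdef
  set c' := (Nat.choose (n + (k+1) - 1) (k+1) : ℝ) with hcdef'
  have key : c * (1 + x) ≤ c' * x :=
    (bk_key n k hn x hx c c' (bk_choose_pos n k hn) (bk_choose_id n k hn)).2 h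
  unfold bk
  rw [div_le_div_iff₀ (by positivity) (by positivity)]
  have e1 : n + (k+1) = (n + k) + 1 := by omega
  rw [e1, pow_succ x k, pow_succ (1+x) (n+k)]
  calc c * x ^ k * ((1 + x) ^ (n + k) * (1 + x))
      = (x ^ k * (1 + x) ^ (n + k)) * (c * (1 + x)) := by ring
    _ ≤ (x ^ k * (1 + x) ^ (n + k)) * (c' * x) :=
        mul_le_mul_of_nonneg_left key (by positivity)
    _ = c' * (x ^ k * x) * (1 + x) ^ (n + k) := by ring

lemma chain_up (f : ℕ → ℝ) (j : ℕ) (h : ∀ i, i < j → f i ≤ f (i+1)) :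
    ∀ k, k ≤ j → f k ≤ f j := by
  induction j with
  | zero =>
    intro k hk
    have : k = 0 := by omega
    simp [this]
  | succ j ih =>
    intro k hk
    rcases Nat.eq_or_lt_of_le hk with h' | hlt
    · rw [h']
    · exact le_trans (ih (fun i hi => h i (by omega)) k (by omega)) (h j (by omega))

lemma chain_down (f : ℕ → ℝ) (j : ℕ) (h : ∀ i, j ≤ i → f (i+1) ≤ f i) :
    ∀ k, j ≤ k → f k ≤ f j := by
  intro k hk
  induction k with
  | zero => have : j = 0 := by omega
            simp [this]
  | succ k ih =>
    rcases Nat.eq_or_lt_of_le hk with h' | hlt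
    · rw [← h']
    · exact le_trans (h k (by omega)) (ih (by omega))

theorem m_knj_le_one (n : ℕ) (hn : 2 ≤ n) (j k : ℕ) (hj : j ≤ n - 2) (hk : k ≤ n)
    (x : ℝ) (hx : x ∈ Set.Ioo ((j : ℝ) / ((n : ℝ) - 1)) (((j : ℝ) + 1) / ((n : ℝ) - 1))) :
    bk n k x / bk n j x ≤ 1 := by
  have hn1 : (0:ℝ) < (n:ℝ) - 1 := by
    have : (2:ℝ) ≤ (n:ℝ) := by exact_mod_cast hn
    linarith
  obtain ⟨hx1, hx2⟩ := hx
  have hxpos : 0 < x := lt_of_le_of_lt (by positivity) hx1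
  have hxl : (j:ℝ) < x * ((n:ℝ) - 1) := by
    rw [div_lt_iff₀ hn1] at hx1; linarith
  have hxr : x * ((n:ℝ) - 1) < (j:ℝ) + 1 := by
    rw [lt_div_iff₀ hn1] at hx2; linarith
  have hbj : 0 < bk n j x := by
    unfold bk
    have := bk_choose_pos n j hn
    positivity
  rw [div_le_one hbj]
  rcases le_total k j with hkj | hjk
  · exact chain_up (fun i => bk n i x) j
      (fun i hi => bk_le_succ n i hn x hxpos
        (by have h1 : (i:ℝ)+1 ≤ (j:ℝ) := by exact_mod_cast Nat.succ_le_of_lt hi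
            linarith))
      k hkj
  · exact chain_down (fun i => bk n i x) j
      (fun i hi => bk_succ_le n i hn x hxpos
        (by have : (j:ℝ) ≤ (i:ℝ) := by exact_mod_cast hi
            linarith))
      k hjk
end

section
/- For n ≥ 2, j ∈ {0,...,n-2}, and x in [j/(n-1), (j+1)/(n-1)], the maximum over k ∈ {0,...,n} of b_{n,k}(x) equals b_{n,j}(x), where b_{n,k}(x) = C(n+k-1,k) x^k (1+x)^{-(n+k)}. -/
open Finset Set

lemma choose_id (n k : ℕ) (hn : 1 ≤ n) :
    (k + 1) * Nat.choose (n + (k + 1) - 1) (k + 1) = (n + k) * Nat.choose (n + k - 1) k := by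
  have h : n + (k + 1) - 1 = (n + k - 1) + 1 := by omega
  have h2 : n + k - 1 + 1 = n + k := by omega
  rw [h]
  have := Nat.add_one_mul_choose_eq (n + k - 1) k
  rw [h2] at this
  rw [h2]
  rw [Nat.mul_comm]
  exact this.symm

lemma key_cmp (n k : ℕ) (hn : 1 ≤ n) (x : ℝ) (hx : 0 ≤ x)
    (h : ((n:ℝ) + k) * x ≤ ((k:ℝ) + 1) * (1 + x)) :
    bk n (k + 1) x ≤ bk n k x := by
  have h1 : (0:ℝ) < 1 + x := by linarith
  have hcid : ((k:ℝ) + 1) * (Nat.choose (n + (k + 1) - 1) (k + 1) : ℝ)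
      = ((n:ℝ) + k) * (Nat.choose (n + k - 1) k : ℝ) := by
    exact_mod_cast choose_id n k hn
  unfold bk
  rw [div_le_div_iff₀ (by positivity) (by positivity)]
  have hstep : (Nat.choose (n + (k + 1) - 1) (k + 1) : ℝ) * x
      ≤ (Nat.choose (n + k - 1) k : ℝ) * (1 + x) := by
    have hk : (0:ℝ) < (k:ℝ) + 1 := by positivity
    refine le_of_mul_le_mul_left ?_ hk
    calc ((k:ℝ) + 1) * ((Nat.choose (n + (k + 1) - 1) (k + 1) : ℝ) * x)
        = (((n:ℝ) + k) * (Nat.choose (n + k - 1) k : ℝ)) * x := by rw [← hcid]; ring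
      _ = (Nat.choose (n + k - 1) k : ℝ) * (((n:ℝ) + k) * x) := by ring
      _ ≤ (Nat.choose (n + k - 1) k : ℝ) * (((k:ℝ) + 1) * (1 + x)) := by
          exact mul_le_mul_of_nonneg_left h (by positivity)
      _ = ((k:ℝ) + 1) * ((Nat.choose (n + k - 1) k : ℝ) * (1 + x)) := by ring
  have hP : (0:ℝ) ≤ x ^ k * (1 + x) ^ (n + k) := by positivity
  calc (Nat.choose (n + (k + 1) - 1) (k + 1) : ℝ) * x ^ (k + 1) * (1 + x) ^ (n + k)
      = ((Nat.choose (n + (k + 1) - 1) (k + 1) : ℝ) * x) * (x ^ k * (1 + x) ^ (n + k)) := by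
        rw [pow_succ]; ring
    _ ≤ ((Nat.choose (n + k - 1) k : ℝ) * (1 + x)) * (x ^ k * (1 + x) ^ (n + k)) :=
        mul_le_mul_of_nonneg_right hstep hP
    _ = (Nat.choose (n + k - 1) k : ℝ) * x ^ k * (1 + x) ^ (n + (k + 1)) := by
        have : n + (k + 1) = (n + k) + 1 := by omega
        rw [this, pow_succ]; ring

lemma key_cmp' (n k : ℕ) (hn : 1 ≤ n) (x : ℝ) (hx : 0 ≤ x)
    (h : ((k:ℝ) + 1) * (1 + x) ≤ ((n:ℝ) + k) * x) :
    bk n k x ≤ bk n (k + 1) x := by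
  have h1 : (0:ℝ) < 1 + x := by linarith
  have hcid : ((k:ℝ) + 1) * (Nat.choose (n + (k + 1) - 1) (k + 1) : ℝ)
      = ((n:ℝ) + k) * (Nat.choose (n + k - 1) k : ℝ) := by
    exact_mod_cast choose_id n k hn
  unfold bk
  rw [div_le_div_iff₀ (by positivity) (by positivity)]
  have hstep : (Nat.choose (n + k - 1) k : ℝ) * (1 + x)
      ≤ (Nat.choose (n + (k + 1) - 1) (k + 1) : ℝ) * x := by
    have hk : (0:ℝ) < (k:ℝ) + 1 := by positivity
    refine le_of_mul_le_mul_left ?_ hk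
    calc ((k:ℝ) + 1) * ((Nat.choose (n + k - 1) k : ℝ) * (1 + x))
        = (Nat.choose (n + k - 1) k : ℝ) * (((k:ℝ) + 1) * (1 + x)) := by ring
      _ ≤ (Nat.choose (n + k - 1) k : ℝ) * (((n:ℝ) + k) * x) :=
          mul_le_mul_of_nonneg_left h (by positivity)
      _ = (((n:ℝ) + k) * (Nat.choose (n + k - 1) k : ℝ)) * x := by ring
      _ = ((k:ℝ) + 1) * ((Nat.choose (n + (k + 1) - 1) (k + 1) : ℝ) * x) := by rw [← hcid]; ring
  have hP : (0:ℝ) ≤ x ^ k * (1 + x) ^ (n + k) := by positivity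
  calc (Nat.choose (n + k - 1) k : ℝ) * x ^ k * (1 + x) ^ (n + (k + 1))
      = ((Nat.choose (n + k - 1) k : ℝ) * (1 + x)) * (x ^ k * (1 + x) ^ (n + k)) := by
        have : n + (k + 1) = (n + k) + 1 := by omega
        rw [this, pow_succ]; ring
    _ ≤ ((Nat.choose (n + (k + 1) - 1) (k + 1) : ℝ) * x) * (x ^ k * (1 + x) ^ (n + k)) :=
        mul_le_mul_of_nonneg_right hstep hP
    _ = (Nat.choose (n + (k + 1) - 1) (k + 1) : ℝ) * x ^ (k + 1) * (1 + x) ^ (n + k) := by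
        rw [pow_succ]; ring

theorem sup_bk_eq_bkj (n : ℕ) (hn : 2 ≤ n) (j : ℕ) (hj : j ≤ n - 2)
    (x : ℝ) (hx : x ∈ Set.Icc ((j : ℝ) / ((n : ℝ) - 1)) (((j : ℝ) + 1) / ((n : ℝ) - 1))) :
    ((range (n + 1)).sup' nonempty_range_add_one fun k => bk n k x) = bk n j x := by
  obtain ⟨hxl, hxr⟩ := hx
  have hn1 : (0:ℝ) < (n:ℝ) - 1 := by
    have : (2:ℝ) ≤ n := by exact_mod_cast hn
    linarith
  have hx0 : 0 ≤ x := le_trans (by positivity) hxl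
  have hjl : (j:ℝ) ≤ ((n:ℝ) - 1) * x := by
    rw [div_le_iff₀ hn1] at hxl; linarith [hxl]
  have hjr : ((n:ℝ) - 1) * x ≤ (j:ℝ) + 1 := by
    rw [le_div_iff₀ hn1] at hxr; linarith [hxr]
  have hn1' : 1 ≤ n := by omega
  -- ascending: for k ≤ j, bk n k x ≤ bk n j x
  have asc : ∀ m : ℕ, (m:ℝ) ≤ ((n:ℝ) - 1) * x → ∀ k ≤ m, bk n k x ≤ bk n m x := by
    intro m
    induction m with
    | zero => intro _ k hk; interval_cases k; exact le_rfl
    | succ m ih =>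
      intro hm k hk
      rcases Nat.lt_or_ge k (m + 1) with hlt | hge
      · have hk' : k ≤ m := Nat.lt_succ_iff.mp hlt
        have hm' : (m:ℝ) ≤ ((n:ℝ) - 1) * x := by
          push_cast at hm ⊢; linarith
        refine le_trans (ih hm' k hk') ?_
        apply key_cmp' n m hn1' x hx0
        push_cast at hm ⊢; linarith
      · have : k = m + 1 := le_antisymm hk hge
        rw [this]
  -- descending: for k ≥ j, bk n k x ≤ bk n j x
  have desc : ∀ k, j ≤ k → bk n k x ≤ bk n j x := by
    intro k hk
    induction k with
    | zero => have : j = 0 := Nat.le_zero.mp hk; rw [this]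
    | succ k ih =>
      rcases Nat.lt_or_ge j (k + 1) with hlt | hge
      · have hk' : j ≤ k := Nat.lt_succ_iff.mp hlt
        refine le_trans ?_ (ih hk')
        apply key_cmp n k hn1' x hx0
        have hjk : (j:ℝ) ≤ (k:ℝ) := by exact_mod_cast hk'
        push_cast; linarith
      · have : j = k + 1 := le_antisymm hk hge
        rw [this]
  apply le_antisymm
  · apply Finset.sup'_le
    intro k hk
    rcases le_or_gt k j with h | h
    · exact asc j hjl k h
    · exact desc k h.le
  · apply Finset.le_sup' (f := fun k => bk n k x)
    simp only [Finset.mem_range]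
    omega
end
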